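/- Let a and b be coprime nonzero integers and let d > 1 be an odd integer with gcd(d, ab) = 1. Then d ∈ OG_{(a,b)} if and only if 2 || ord_p(a/b) for every prime p dividing d. -/

import Mathlib

/-- `d ∈ OG_{(a,b)}`: `d` divides `a^k + b^k` for some odd integer `k ≥ 1`. -/
def OddlyGood (a b : ℤ) (d : ℕ) : Prop :=
  ∃ k : ℕ, Odd k ∧ 1 ≤ k ∧ (d : ℤ) ∣ a ^ k + b ^ k

/-- `ord_n(a/b)`: the multiplicative order of `a·b⁻¹` modulo `n`. -/
noncomputable def ordAB (a b : ℤ) (n : ℕ) : ℕ :=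
  orderOf ((a : ZMod n) * (b : ZMod n)⁻¹)

private lemma isUnit_cast_of_coprime {n : ℕ} {a : ℤ} (h : IsCoprime (n : ℤ) a) :
    IsUnit (a : ZMod n) := by
  obtain ⟨x, y, hxy⟩ := h
  refine IsUnit.of_mul_eq_one ((y : ℤ) : ZMod n) ?_
  have := congrArg (fun z : ℤ => (z : ZMod n)) hxy
  push_cast at this
  rw [ZMod.natCast_self] at this
  rw [mul_comm]
  simpa using this

/-- Square roots of 1 mod an odd prime power are `±1`. -/
private lemma sq_cases {p e : ℕ} (hp : p.Prime) (hp2 : p ≠ 2) (x : ZMod (p ^ e))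
    (hx : x ^ 2 = 1) : x = 1 ∨ x = -1 := by
  obtain ⟨y, rfl⟩ := ZMod.intCast_surjective x
  have h0 : (((y - 1) * (y + 1) : ℤ) : ZMod (p ^ e)) = 0 := by
    push_cast
    linear_combination hx
  have h : ((p : ℤ) ^ e) ∣ (y - 1) * (y + 1) := by
    have := (ZMod.intCast_zmod_eq_zero_iff_dvd _ (p ^ e)).mp h0
    push_cast at this
    exact this
  have hpi : Prime (p : ℤ) := Nat.prime_iff_prime_int.mp hp
  by_cases hc : (p : ℤ) ∣ y + 1
  · have hnd : ¬ (p : ℤ) ∣ y - 1 := by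
      intro hd
      have : (p : ℤ) ∣ 2 := by
        have := dvd_sub hc hd
        simpa using this
      have : p ∣ 2 := by exact_mod_cast this
      exact hp2 ((Nat.prime_dvd_prime_iff_eq hp Nat.prime_two).mp this)
    have hcop : IsCoprime ((p : ℤ) ^ e) (y - 1) :=
      ((hpi.coprime_iff_not_dvd.mpr hnd)).pow_left
    have hdvd : ((p : ℤ) ^ e) ∣ y + 1 := hcop.dvd_of_dvd_mul_left h
    right
    have : (((y + 1 : ℤ)) : ZMod (p ^ e)) = 0 := by
      rw [ZMod.intCast_zmod_eq_zero_iff_dvd]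
      push_cast
      exact hdvd
    push_cast at this
    exact eq_neg_of_add_eq_zero_left this
  · have hcop : IsCoprime ((p : ℤ) ^ e) (y + 1) :=
      ((hpi.coprime_iff_not_dvd.mpr hc)).pow_left
    have hdvd : ((p : ℤ) ^ e) ∣ y - 1 := hcop.dvd_of_dvd_mul_right h
    left
    have : (((y - 1 : ℤ)) : ZMod (p ^ e)) = 0 := by
      rw [ZMod.intCast_zmod_eq_zero_iff_dvd]
      push_cast
      exact hdvd
    push_cast at this
    exact sub_eq_zero.mp this

private lemma forward_prime {a b : ℤ} {p : ℕ} (hp : p.Prime) (hp2 : p ≠ 2)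
    (hcb : IsCoprime (p : ℤ) b) {k : ℕ} (hk : Odd k)
    (hdvd : (p : ℤ) ∣ a ^ k + b ^ k) :
    2 ∣ ordAB a b p ∧ ¬ 2 ^ 2 ∣ ordAB a b p := by
  haveI : Fact p.Prime := ⟨hp⟩
  haveI : Fact (2 < p) := ⟨hp.two_le.lt_of_ne (Ne.symm hp2)⟩
  set u : ZMod p := (a : ZMod p) * (b : ZMod p)⁻¹ with hu
  have hb0 : (b : ZMod p) ≠ 0 := (isUnit_cast_of_coprime hcb).ne_zero
  have hsum : (a : ZMod p) ^ k + (b : ZMod p) ^ k = 0 := by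
    have := (ZMod.intCast_zmod_eq_zero_iff_dvd _ p).mpr hdvd
    push_cast at this
    exact this
  have h1 : (a : ZMod p) ^ k = -((b : ZMod p) ^ k) := eq_neg_of_add_eq_zero_left hsum
  have huk : u ^ k = -1 := by
    rw [hu, mul_pow, inv_pow, h1, neg_mul, mul_inv_cancel₀ (pow_ne_zero _ hb0)]
  have hne : (-1 : ZMod p) ≠ 1 := ZMod.neg_one_ne_one
  have hord2k : orderOf u ∣ k * 2 := by
    apply orderOf_dvd_of_pow_eq_one
    rw [pow_mul, huk, neg_one_sq]
  have hordk : ¬ orderOf u ∣ k := by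
    intro h
    exact hne (huk ▸ orderOf_dvd_iff_pow_eq_one.mp h)
  have hres : ordAB a b p = orderOf u := rfl
  rw [hres]
  constructor
  · rcases Nat.even_or_odd (orderOf u) with he | ho
    · exact he.two_dvd
    · exfalso
      apply hordk
      have hcop : Nat.Coprime (orderOf u) 2 := ho.coprime_two_right
      exact (Nat.Coprime.dvd_of_dvd_mul_right hcop hord2k)
  · intro h4
    obtain ⟨t, ht⟩ := dvd_trans h4 hord2k
    have : 2 ∣ k := by omega
    rw [Nat.odd_iff] at hk
    omega

private lemma backward_pp {a b : ℤ} {p e : ℕ} (hp : p.Prime) (hp2 : p ≠ 2) (he : 0 < e)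
    (hca : IsCoprime (((p ^ e : ℕ)) : ℤ) a) (hcb : IsCoprime (((p ^ e : ℕ)) : ℤ) b)
    (h2 : 2 ∣ ordAB a b p) (h4 : ¬ 2 ^ 2 ∣ ordAB a b p) :
    ∃ k : ℕ, Odd k ∧ 1 ≤ k ∧ ((p ^ e : ℕ) : ℤ) ∣ a ^ k + b ^ k := by
  haveI : Fact p.Prime := ⟨hp⟩
  haveI : Fact (2 < p) := ⟨hp.two_le.lt_of_ne (Ne.symm hp2)⟩
  haveI : NeZero (p ^ e) := ⟨pow_ne_zero e hp.pos.ne'⟩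
  obtain ⟨A, hA⟩ := isUnit_cast_of_coprime hca
  obtain ⟨B, hB⟩ := isUnit_cast_of_coprime hcb
  set f : ZMod (p ^ e) →+* ZMod p := ZMod.castHom (dvd_pow_self p he.ne') (ZMod p) with hf
  set φ : (ZMod (p ^ e))ˣ →* (ZMod p)ˣ := Units.map f.toMonoidHom with hφ
  set V : (ZMod (p ^ e))ˣ := A * B⁻¹ with hV
  have hfa : ((φ A : (ZMod p)ˣ) : ZMod p) = (a : ZMod p) := by
    show f (A : ZMod (p ^ e)) = _
    rw [hA, map_intCast]
  have hfb : ((φ B : (ZMod p)ˣ) : ZMod p) = (b : ZMod p) := by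
    show f (B : ZMod (p ^ e)) = _
    rw [hB, map_intCast]
  have hφV : ((φ V : (ZMod p)ˣ) : ZMod p) = (a : ZMod p) * (b : ZMod p)⁻¹ := by
    rw [hV, map_mul, map_inv, Units.val_mul, Units.val_inv_eq_inv_val, hfa, hfb]
  have hord : orderOf (φ V) = ordAB a b p := by
    rw [ordAB, ← hφV, orderOf_units]
  have hdvdM : orderOf (φ V) ∣ orderOf V := orderOf_map_dvd φ V
  set M := orderOf V with hM
  have hMpos : 0 < M := orderOf_pos V
  have hM2 : 2 ∣ M := dvd_trans (hord ▸ h2) hdvdM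
  have hM4 : ¬ 4 ∣ M := by
    intro h44
    set t := V ^ (M / 4) with ht
    have ht4 : t ^ 4 = 1 := by
      rw [ht, ← pow_mul, Nat.div_mul_cancel h44, hM, pow_orderOf_eq_one]
    have ht2 : t ^ 2 = V ^ (M / 2) := by
      rw [ht, ← pow_mul]
      congr 1
      omega
    have ht2ne : t ^ 2 ≠ 1 := by
      rw [ht2]
      intro hh
      have hdd : orderOf V ∣ M / 2 := orderOf_dvd_iff_pow_eq_one.mpr hh
      have hle := Nat.le_of_dvd (by omega) hdd
      omega
    have h22 : ((t ^ 2 : (ZMod (p ^ e))ˣ) : ZMod (p ^ e)) ^ 2 = 1 := by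
      rw [← Units.val_pow_eq_pow_val, ← pow_mul]
      norm_num [ht4]
    have hsq : ((t ^ 2 : (ZMod (p ^ e))ˣ) : ZMod (p ^ e)) = -1 := by
      rcases sq_cases hp hp2 _ h22 with h1 | h1
      · exact absurd (Units.ext (by rw [h1, Units.val_one])) ht2ne
      · exact h1
    have hw2 : ((φ t : (ZMod p)ˣ) : ZMod p) ^ 2 = -1 := by
      rw [← Units.val_pow_eq_pow_val, ← map_pow, Units.coe_map]
      show f ((t ^ 2 : (ZMod (p ^ e))ˣ) : ZMod (p ^ e)) = -1
      rw [hsq, map_neg, map_one]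
    have hw4 : orderOf (φ t) ∣ 4 :=
      orderOf_dvd_of_pow_eq_one (by rw [← map_pow, ht4, map_one])
    have hw2ne : ¬ orderOf (φ t) ∣ 2 := by
      intro hh
      have h1 : (φ t) ^ 2 = 1 := orderOf_dvd_iff_pow_eq_one.mp hh
      have h1' : ((φ t : (ZMod p)ˣ) : ZMod p) ^ 2 = 1 := by
        rw [← Units.val_pow_eq_pow_val, h1, Units.val_one]
      rw [hw2] at h1'
      exact ZMod.neg_one_ne_one h1'
    have ho4 : orderOf (φ t) = 4 := by
      have hop : 0 < orderOf (φ t) := orderOf_pos (φ t)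
      have hle : orderOf (φ t) ≤ 4 := Nat.le_of_dvd (by norm_num) hw4
      set o := orderOf (φ t) with hoo
      interval_cases o
      · exact absurd (one_dvd 2) hw2ne
      · exact absurd (dvd_refl 2) hw2ne
      · exact absurd hw4 (by norm_num)
      · rfl
    have hdd : orderOf (φ t) ∣ orderOf (φ V) := by
      rw [ht, map_pow]
      exact orderOf_pow_dvd _
    rw [ho4, hord] at hdd
    exact h4 (by norm_num at hdd ⊢; exact hdd)
  set m := M / 2 with hm
  have hmodd : m % 2 = 1 := by omega
  have hmpos : 0 < m := by omega
  have hVm2 : (V ^ m) ^ 2 = 1 := by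
    rw [← pow_mul]
    have hmm : m * 2 = M := by omega
    rw [hmm, hM, pow_orderOf_eq_one]
  have hVmne : V ^ m ≠ 1 := by
    intro hh
    have hdd : orderOf V ∣ m := orderOf_dvd_iff_pow_eq_one.mpr hh
    have hle := Nat.le_of_dvd hmpos hdd
    omega
  have hVmval2 : ((V ^ m : (ZMod (p ^ e))ˣ) : ZMod (p ^ e)) ^ 2 = 1 := by
    rw [← Units.val_pow_eq_pow_val, hVm2, Units.val_one]
  have hVmval : ((V ^ m : (ZMod (p ^ e))ˣ) : ZMod (p ^ e)) = -1 := by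
    rcases sq_cases hp hp2 _ hVmval2 with h1 | h1
    · exact absurd (Units.ext (by rw [h1, Units.val_one])) hVmne
    · exact h1
  have hVmu : V ^ m = -1 := by
    apply Units.ext
    rw [hVmval, Units.val_neg, Units.val_one]
  have hAB : A ^ m = -1 * B ^ m := by
    rw [← hVmu, hV, mul_pow, inv_pow, mul_assoc, inv_mul_cancel, mul_one]
  have hsum : (a : ZMod (p ^ e)) ^ m + (b : ZMod (p ^ e)) ^ m = 0 := by
    have hval := congrArg (Units.val) hAB
    rw [Units.val_mul, Units.val_pow_eq_pow_val, Units.val_pow_eq_pow_val, hA, hB,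
      Units.val_neg, Units.val_one] at hval
    rw [hval]
    ring
  refine ⟨m, Nat.odd_iff.mpr hmodd, hmpos, ?_⟩
  rw [← ZMod.intCast_zmod_eq_zero_iff_dvd]
  push_cast
  push_cast at hsum
  linear_combination hsum

private lemma backward_aux (a b : ℤ) :
    ∀ d : ℕ, Odd d → IsCoprime (d : ℤ) (a * b) →
      (∀ p : ℕ, p.Prime → p ∣ d → 2 ∣ ordAB a b p ∧ ¬ 2 ^ 2 ∣ ordAB a b p) →
      ∃ k : ℕ, Odd k ∧ 1 ≤ k ∧ (d : ℤ) ∣ a ^ k + b ^ k := by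
  intro d
  induction d using Nat.recOnPosPrimePosCoprime with
  | prime_pow p e hpp he =>
    intro hodd hcop hyp
    have hp : p.Prime := hpp
    have hp2 : p ≠ 2 := by
      rintro rfl
      rw [Nat.odd_iff] at hodd
      have : 2 ∣ 2 ^ e := dvd_pow_self 2 he.ne'
      omega
    have hca : IsCoprime (((p ^ e : ℕ)) : ℤ) a :=
      hcop.of_isCoprime_of_dvd_right (dvd_mul_right a b)
    have hcb : IsCoprime (((p ^ e : ℕ)) : ℤ) b :=
      hcop.of_isCoprime_of_dvd_right (dvd_mul_left b a)
    obtain ⟨h2, h4⟩ := hyp p hp (dvd_pow_self p he.ne')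
    exact backward_pp hp hp2 he hca hcb h2 h4
  | zero =>
    intro hodd
    exact absurd hodd (by decide)
  | one =>
    exact fun _ _ _ => ⟨1, odd_one, le_refl 1, one_dvd _⟩
  | coprime m n hm1 hn1 hmn ihm ihn =>
    intro hodd hcop hyp
    have hoddm : Odd m := (Nat.odd_mul.mp hodd).1
    have hoddn : Odd n := (Nat.odd_mul.mp hodd).2
    have hdm : ((m : ℤ)) ∣ ((m * n : ℕ) : ℤ) := by push_cast; exact Dvd.intro _ rfl
    have hdn : ((n : ℤ)) ∣ ((m * n : ℕ) : ℤ) := by push_cast; exact dvd_mul_left _ _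
    obtain ⟨k1, hk1o, hk1p, hk1d⟩ := ihm hoddm (hcop.of_isCoprime_of_dvd_left hdm)
      (fun p hp hpd => hyp p hp (hpd.trans (dvd_mul_right m n)))
    obtain ⟨k2, hk2o, hk2p, hk2d⟩ := ihn hoddn (hcop.of_isCoprime_of_dvd_left hdn)
      (fun p hp hpd => hyp p hp (hpd.trans (dvd_mul_left n m)))
    set k := Nat.lcm k1 k2 with hk
    have hkdvd : k ∣ k1 * k2 := Nat.lcm_dvd (Dvd.intro _ rfl) (dvd_mul_left _ _)
    have hkodd : Odd k := by
      rcases Nat.even_or_odd k with hev | hod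
      · exfalso
        have h2 : (2 : ℕ) ∣ k1 * k2 := hev.two_dvd.trans hkdvd
        have hodd12 : Odd (k1 * k2) := hk1o.mul hk2o
        rw [Nat.odd_iff] at hodd12
        omega
      · exact hod
    have hkpos : 1 ≤ k := Nat.pos_of_ne_zero (Nat.lcm_ne_zero (by omega) (by omega))
    have key : ∀ (c : ℕ) (kk : ℕ), Odd kk → kk ∣ k → (c : ℤ) ∣ a ^ kk + b ^ kk →
        (c : ℤ) ∣ a ^ k + b ^ k := by
      intro c kk hkko hkkd hcd
      obtain ⟨q, hq⟩ := hkkd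
      have hqodd : Odd q := by
        rcases Nat.even_or_odd q with hev | hod
        · exfalso
          have hqk : q ∣ k := ⟨kk, by rw [hq, mul_comm]⟩
          have h2k : (2 : ℕ) ∣ k := hev.two_dvd.trans hqk
          rw [Nat.odd_iff] at hkodd
          omega
        · exact hod
      have : a ^ k + b ^ k = (a ^ kk) ^ q + (b ^ kk) ^ q := by
        rw [← pow_mul, ← pow_mul, ← hq]
      rw [this]
      exact hcd.trans (Odd.add_dvd_pow_add_pow _ _ hqodd)
    have hdvd1 : (m : ℤ) ∣ a ^ k + b ^ k := key m k1 hk1o (Nat.dvd_lcm_left _ _) hk1d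
    have hdvd2 : (n : ℤ) ∣ a ^ k + b ^ k := key n k2 hk2o (Nat.dvd_lcm_right _ _) hk2d
    have hco : IsCoprime (m : ℤ) (n : ℤ) := Nat.isCoprime_iff_coprime.mpr hmn
    refine ⟨k, hkodd, hkpos, ?_⟩
    push_cast
    exact hco.mul_dvd hdvd1 hdvd2

theorem oddlyGood_iff (a b : ℤ) (ha : a ≠ 0) (hb : b ≠ 0) (hab : IsCoprime a b)
    (d : ℕ) (hd : 1 < d) (hdodd : Odd d) (hdab : IsCoprime (d : ℤ) (a * b)) :
    OddlyGood a b d ↔ ∀ p : ℕ, p.Prime → p ∣ d →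
      2 ∣ ordAB a b p ∧ ¬ 2 ^ 2 ∣ ordAB a b p := by
  constructor
  · rintro ⟨k, hko, hkp, hkd⟩ p hp hpd
    have hp2 : p ≠ 2 := by
      rintro rfl
      rw [Nat.odd_iff] at hdodd
      obtain ⟨c, hc⟩ := hpd
      omega
    have hpdZ : (p : ℤ) ∣ (d : ℤ) := Int.natCast_dvd_natCast.mpr hpd
    have hcb : IsCoprime ((p : ℤ)) b :=
      (hdab.of_isCoprime_of_dvd_right (dvd_mul_left b a)).of_isCoprime_of_dvd_left hpdZ
    exact forward_prime hp hp2 hcb hko (hpdZ.trans hkd)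
  · intro h
    exact backward_aux a b d hdodd hdab h
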